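/- Given integers z₁, z₂ and a positive integer m with gcd(z₁, z₂, m) = 1, there exists an integer u with 0 ≤ u < m such that gcd(u·z₁ + z₂, m) = 1. -/
import Mathlib


theorem stmt_8 (z₁ z₂ : ℤ) (m : ℕ) (hm : 0 < m)
    (h : Int.gcd (Int.gcd z₁ z₂) m = 1) :
    ∃ u : ℤ, 0 ≤ u ∧ u < m ∧ Int.gcd (u * z₁ + z₂) m = 1 := by
  classical
  set S : Finset ℕ := m.primeFactors.filter (fun p : ℕ => ¬ ((p:ℤ) ∣ z₂)) with hS
  set u : ℕ := ∏ p ∈ S, p with hu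
  have key : Int.gcd ((u:ℤ) * z₁ + z₂) m = 1 := by
    by_contra hne
    obtain ⟨p, hp, hpd⟩ := Nat.exists_prime_and_dvd hne
    have hpm : p ∣ m := by
      have := hpd.trans (Nat.gcd_dvd_right _ _)
      simpa using this
    have hpa : (p:ℤ) ∣ (u:ℤ) * z₁ + z₂ := by
      have := hpd.trans (Nat.gcd_dvd_left _ _)
      exact (Int.natAbs_dvd_natAbs.mp (by simpa using this))
    by_cases hz2 : (p:ℤ) ∣ z₂
    · have hpu : ¬ p ∣ u := by
        intro hdvd
        obtain ⟨q, hqS, hpq⟩ := (Nat.Prime.prime hp).dvd_finset_prod_iff (fun x : ℕ => x) |>.mp hdvd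
        have hq : q.Prime := Nat.prime_of_mem_primeFactors (Finset.mem_filter.mp hqS).1
        have : p = q := ((Nat.prime_dvd_prime_iff_eq hp hq).mp hpq)
        subst this
        exact (Finset.mem_filter.mp hqS).2 hz2
      have hpz1 : (p:ℤ) ∣ z₁ := by
        have h1 : (p:ℤ) ∣ (u:ℤ) * z₁ := by
          have := dvd_sub hpa hz2
          simpa using this
        rcases (Int.Prime.dvd_mul' hp h1) with h2 | h2
        · exact absurd (Int.natCast_dvd_natCast.mp h2) hpu
        · exact h2
      have : (p:ℤ) ∣ Int.gcd z₁ z₂ := Int.natCast_dvd_natCast.mpr (Nat.dvd_gcd (Int.natCast_dvd_natCast.mp (by exact_mod_cast Int.natAbs_dvd_natAbs.mpr hpz1)) (by exact_mod_cast Int.natAbs_dvd_natAbs.mpr hz2))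
      have hfin : p ∣ Int.gcd (Int.gcd z₁ z₂) m := Nat.dvd_gcd (by exact_mod_cast Int.natAbs_dvd_natAbs.mpr this) hpm
      rw [h] at hfin
      exact hp.one_lt.ne' (Nat.dvd_one.mp hfin)
    · have hpS : p ∈ S := by
        rw [hS, Finset.mem_filter, Nat.mem_primeFactors]
        exact ⟨⟨hp, hpm, hm.ne'⟩, hz2⟩
      have hpu : p ∣ u := Finset.dvd_prod_of_mem (fun x : ℕ => x) hpS
      have : (p:ℤ) ∣ z₂ := by
        have h1 : (p:ℤ) ∣ (u:ℤ) * z₁ := dvd_mul_of_dvd_left (Int.natCast_dvd_natCast.mpr hpu) _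
        have := dvd_sub hpa h1
        simpa using this
      exact hz2 this
  refine ⟨(u:ℤ) % m, Int.emod_nonneg _ (by exact_mod_cast hm.ne'), Int.emod_lt_of_pos _ (by exact_mod_cast hm), ?_⟩
  have hco : IsCoprime ((u:ℤ) * z₁ + z₂) (m:ℤ) := Int.isCoprime_iff_gcd_eq_one.mpr key
  have heq : ((u:ℤ) % m) * z₁ + z₂ = (u:ℤ) * z₁ + z₂ + (m:ℤ) * (-((u:ℤ) / m) * z₁) := by
    rw [Int.emod_def]; ring
  rw [heq]
  exact Int.isCoprime_iff_gcd_eq_one.mp (hco.add_mul_left_left _)
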